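/- For every character c, the SA interval of the one-character string c equals the interval [C[c]+1 .. C[c] + rank(L,c,n)]; that is, i ∈ I(c) if and only if C[c] + 1 ≤ i ≤ C[c] + rank(L,c,n). -/

import Mathlib

/-- The suffix `T[i..n]` of a 1-indexed string of length `n` (as a list). -/
def suffix {α : Type*} (T : ℕ → α) (n i : ℕ) : List α :=
  (List.range' i (n + 1 - i)).map T

/-- `rank(L,c,i)`: the number of occurrences of the character `c` in `L[1..i]`. -/
def rankL {α : Type*} [DecidableEq α] (L : ℕ → α) (c : α) (i : ℕ) : ℕ :=
  ((Finset.Icc 1 i).filter (fun j => L j = c)).card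

/-- `C[c]`: the number of positions `j ∈ [1..n]` with `L[j]` strictly smaller than `c`. -/
def Cc {α : Type*} [LinearOrder α] (L : ℕ → α) (n : ℕ) (c : α) : ℕ :=
  ((Finset.Icc 1 n).filter (fun j => L j < c)).card

/-- `LF(i) = C[L[i]] + rank(L, L[i], i)`. -/
def LF {α : Type*} [LinearOrder α] (L : ℕ → α) (n i : ℕ) : ℕ :=
  Cc L n (L i) + rankL L (L i) i

/-- The SA interval of a nonempty string `Y`:
`I(Y) = {i ∈ [1..n] : Y is a prefix of T[SA[i]..]}`. -/
def SAIv {α : Type*} (T : ℕ → α) (SA : ℕ → ℕ) (n : ℕ) (Y : List α) : Set ℕ :=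
  {i | 1 ≤ i ∧ i ≤ n ∧ Y <+: suffix T n (SA i)}

private lemma card_filter_comp (n : ℕ) (g : ℕ → ℕ)
    (hg : Set.BijOn g (Set.Icc 1 n) (Set.Icc 1 n))
    (P : ℕ → Prop) [DecidablePred P] :
    ((Finset.Icc 1 n).filter (fun j => P (g j))).card
      = ((Finset.Icc 1 n).filter P).card := by
  apply Finset.card_bij (fun j _ => g j)
  · intro j hj
    simp only [Finset.mem_filter, Finset.mem_Icc] at *
    have := hg.mapsTo (Set.mem_Icc.mpr ⟨hj.1.1, hj.1.2⟩)
    exact ⟨Set.mem_Icc.mp this, hj.2⟩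
  · intro a ha b hb h
    simp only [Finset.mem_filter, Finset.mem_Icc] at ha hb
    exact hg.injOn (Set.mem_Icc.mpr ha.1) (Set.mem_Icc.mpr hb.1) h
  · intro p hp
    simp only [Finset.mem_filter, Finset.mem_Icc] at hp
    obtain ⟨j, hj, hgj⟩ := hg.surjOn (Set.mem_Icc.mpr hp.1)
    refine ⟨j, ?_, hgj⟩
    simp only [Finset.mem_filter, Finset.mem_Icc]
    have := Set.mem_Icc.mp hj
    exact ⟨this, by rw [hgj]; exact hp.2⟩

private lemma mem_of_downclosed {n : ℕ} (S : Finset ℕ) (hS : S ⊆ Finset.Icc 1 n)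
    (hdc : ∀ i j, 1 ≤ i → i ≤ j → j ∈ S → i ∈ S) (i : ℕ) :
    i ∈ S ↔ 1 ≤ i ∧ i ≤ S.card := by
  constructor
  · intro hi
    have h1 : 1 ≤ i := (Finset.mem_Icc.mp (hS hi)).1
    refine ⟨h1, ?_⟩
    have hsub : Finset.Icc 1 i ⊆ S := by
      intro j hj
      have hj' := Finset.mem_Icc.mp hj
      exact hdc j i hj'.1 hj'.2 hi
    calc i = (Finset.Icc 1 i).card := by simp
      _ ≤ S.card := Finset.card_le_card hsub
  · rintro ⟨h1, h2⟩
    by_contra hi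
    have hsub : S ⊆ Finset.Icc 1 (i - 1) := by
      intro j hj
      have hj1 := (Finset.mem_Icc.mp (hS hj)).1
      rw [Finset.mem_Icc]
      refine ⟨hj1, ?_⟩
      by_contra hji
      push_neg at hji
      exact hi (hdc i j h1 (by omega) hj)
    have hc := Finset.card_le_card hsub
    rw [Nat.card_Icc] at hc
    omega

private lemma lex_head_le {α : Type*} [LinearOrder α] {x y : α} {l m : List α}
    (h : List.Lex (· < ·) (x :: l) (y :: m)) : x ≤ y := by
  cases h with
  | cons _ => exact le_refl _
  | rel h => exact le_of_lt h

private lemma suffix_cons {α : Type*} (T : ℕ → α) (n p : ℕ) (h2 : p ≤ n) :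
    suffix T n p = T p :: (List.range' (p + 1) (n - p)).map T := by
  unfold suffix
  have h : n + 1 - p = (n - p) + 1 := by omega
  rw [h, List.range'_succ]
  simp

private lemma shift_bij (n : ℕ) (hn : 1 ≤ n) :
    Set.BijOn (fun p => if p = 1 then n else p - 1) (Set.Icc 1 n) (Set.Icc 1 n) := by
  refine ⟨?_, ?_, ?_⟩
  · intro p hp
    simp only [Set.mem_Icc] at *
    split <;> omega
  · intro p hp q hq h
    simp only [Set.mem_Icc] at hp hq
    simp only at h
    split at h <;> split at h <;> omega
  · intro r hr
    simp only [Set.mem_Icc] at hr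
    by_cases h : r = n
    · exact ⟨1, Set.mem_Icc.mpr ⟨le_refl 1, hn⟩, by simp [h]⟩
    · refine ⟨r + 1, Set.mem_Icc.mpr ⟨by omega, by omega⟩, ?_⟩
      have : ¬ (r + 1 = 1) := by omega
      simp [this]
      omega

/-- For every character `c`, the SA interval of the one-character string `c`
equals the interval `[C[c]+1 .. C[c] + rank(L,c,n)]`. -/
theorem stmt3 {α : Type*} [LinearOrder α] (n : ℕ) (hn : 1 ≤ n)
    (T : ℕ → α) (SA : ℕ → ℕ) (L : ℕ → α)
    (hlast : ∀ i, 1 ≤ i → i < n → T n < T i)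
    (hSAbij : Set.BijOn SA (Set.Icc 1 n) (Set.Icc 1 n))
    (hSAsorted : ∀ i j, 1 ≤ i → i < j → j ≤ n →
      List.Lex (· < ·) (suffix T n (SA i)) (suffix T n (SA j)))
    (hL : ∀ i, 1 ≤ i → i ≤ n → L i = if SA i = 1 then T n else T (SA i - 1)) :
    ∀ (c : α) (i : ℕ),
      i ∈ SAIv T SA n [c] ↔ (Cc L n c + 1 ≤ i ∧ i ≤ Cc L n c + rankL L c n) := by
  classical
  intro c i
  have hSAmem : ∀ j, 1 ≤ j → j ≤ n → 1 ≤ SA j ∧ SA j ≤ n := fun j h1 h2 =>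
    Set.mem_Icc.mp (hSAbij.mapsTo (Set.mem_Icc.mpr ⟨h1, h2⟩))
  -- monotonicity of the first character
  have hmono : ∀ a b, 1 ≤ a → a ≤ b → b ≤ n → T (SA a) ≤ T (SA b) := by
    intro a b ha hab hb
    rcases eq_or_lt_of_le hab with rfl | hab
    · exact le_refl _
    · have hlex := hSAsorted a b ha hab hb
      have ha' := hSAmem a ha (le_trans (le_of_lt hab) hb)
      have hb' := hSAmem b (by omega) hb
      rw [suffix_cons T n _ ha'.2, suffix_cons T n _ hb'.2] at hlex
      exact lex_head_le hlex
  set Slt := (Finset.Icc 1 n).filter (fun j => T (SA j) < c) with hSlt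
  set Sle := (Finset.Icc 1 n).filter (fun j => T (SA j) ≤ c) with hSle
  have hSltmem : ∀ j, j ∈ Slt ↔ 1 ≤ j ∧ j ≤ Slt.card := by
    apply mem_of_downclosed _ (Finset.filter_subset _ _)
    intro a b ha hab hb
    rw [hSlt, Finset.mem_filter, Finset.mem_Icc] at *
    exact ⟨⟨ha, le_trans hab hb.1.2⟩, lt_of_le_of_lt (hmono a b ha hab hb.1.2) hb.2⟩
  have hSlemem : ∀ j, j ∈ Sle ↔ 1 ≤ j ∧ j ≤ Sle.card := by
    apply mem_of_downclosed _ (Finset.filter_subset _ _)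
    intro a b ha hab hb
    rw [hSle, Finset.mem_filter, Finset.mem_Icc] at *
    exact ⟨⟨ha, le_trans hab hb.1.2⟩, le_trans (hmono a b ha hab hb.1.2) hb.2⟩
  -- the composed bijection: j ↦ (if SA j = 1 then n else SA j - 1)
  have hgbij : Set.BijOn (fun j => if SA j = 1 then n else SA j - 1)
      (Set.Icc 1 n) (Set.Icc 1 n) := (shift_bij n hn).comp hSAbij
  have hLval : ∀ j ∈ Finset.Icc 1 n,
      L j = T (if SA j = 1 then n else SA j - 1) := by
    intro j hj
    rw [Finset.mem_Icc] at hj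
    rw [hL j hj.1 hj.2, apply_ite T]
  -- counting identities
  have hcount : ∀ (P : α → Prop) [DecidablePred P],
      ((Finset.Icc 1 n).filter (fun j => P (L j))).card
        = ((Finset.Icc 1 n).filter (fun j => P (T (SA j)))).card := by
    intro P _
    have h1 : ((Finset.Icc 1 n).filter (fun j => P (L j)))
        = ((Finset.Icc 1 n).filter (fun j => P (T (if SA j = 1 then n else SA j - 1)))) := by
      apply Finset.filter_congr
      intro j hj
      rw [hLval j hj]
    rw [h1]
    rw [card_filter_comp n _ hgbij (fun p => P (T p))]
    rw [← card_filter_comp n SA hSAbij (fun p => P (T p))]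
  have hCc : Cc L n c = Slt.card := by
    rw [Cc, hSlt]
    exact hcount (fun x => x < c)
  have hrank : rankL L c n = ((Finset.Icc 1 n).filter (fun j => T (SA j) = c)).card := by
    rw [rankL]
    exact hcount (fun x => x = c)
  have hSlecard : Sle.card = Cc L n c + rankL L c n := by
    rw [hCc, hrank, hSle, hSlt]
    rw [← Finset.card_union_of_disjoint]
    · congr 1
      ext j
      simp only [Finset.mem_union, Finset.mem_filter, Finset.mem_Icc]
      constructor
      · rintro ⟨h1, h2⟩
        rcases lt_or_eq_of_le h2 with h | h
        · exact Or.inl ⟨h1, h⟩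
        · exact Or.inr ⟨h1, h⟩
      · rintro (⟨h1, h2⟩ | ⟨h1, h2⟩)
        · exact ⟨h1, le_of_lt h2⟩
        · exact ⟨h1, le_of_eq h2⟩
    · rw [Finset.disjoint_filter]
      intro j _ h1 h2
      exact absurd h2 (ne_of_lt h1)
  -- main equivalence
  constructor
  · rintro ⟨h1, h2, hpre⟩
    have hm := hSAmem i h1 h2
    rw [suffix_cons T n _ hm.2, List.cons_prefix_cons] at hpre
    have hc : T (SA i) = c := hpre.1.symm
    have hile : i ∈ Sle := by
      rw [hSle, Finset.mem_filter, Finset.mem_Icc]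
      exact ⟨⟨h1, h2⟩, le_of_eq hc⟩
    have hinlt : i ∉ Slt := by
      rw [hSlt, Finset.mem_filter]
      rintro ⟨_, hlt⟩
      exact absurd hc (ne_of_lt hlt)
    rw [hSlemem] at hile
    rw [hSltmem] at hinlt
    push_neg at hinlt
    constructor
    · rw [hCc]; exact hinlt h1
    · rw [← hSlecard]; exact hile.2
  · rintro ⟨h1, h2⟩
    have hi1 : 1 ≤ i := by omega
    have hile : i ∈ Sle := by
      rw [hSlemem]
      exact ⟨hi1, by rw [hSlecard]; omega⟩
    have hinlt : i ∉ Slt := by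
      rw [hSltmem]
      rw [hCc] at h1
      omega
    have hin : i ≤ n := by
      have := (Finset.mem_Icc.mp (Finset.mem_filter.mp hile).1).2
      exact this
    have hle' := (Finset.mem_filter.mp hile).2
    have hnlt : ¬ T (SA i) < c := fun h => hinlt (by
      rw [hSlt, Finset.mem_filter]
      exact ⟨(Finset.mem_filter.mp hile).1, h⟩)
    have hc : T (SA i) = c := le_antisymm hle' (le_of_not_gt hnlt)
    refine ⟨hi1, hin, ?_⟩
    have hm := hSAmem i hi1 hin
    rw [suffix_cons T n _ hm.2, List.cons_prefix_cons]
    exact ⟨hc.symm, List.nil_prefix⟩
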